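/- Under the stated assumptions, the matrix T̂ = Ŵ⁻¹V'M_F satisfies T̂T̂' = Ŵ⁻¹(I_l − σ₀²D⁻¹Ŵ⁻¹) and, with Û = V'M_F V·D + σ₀²I_l, also T̂T̂' = DÛ⁻¹(I_l − σ₀²Û⁻¹). -/

import Mathlib

open Matrix

lemma mulVec_inj_of_fullrank {n m : ℕ} (A : Matrix (Fin n) (Fin m) ℝ)
    (h : A.rank = m) : Function.Injective A.mulVecLin := by
  rw [← LinearMap.ker_eq_bot]
  have h1 := A.mulVecLin.finrank_range_add_finrank_ker
  rw [Matrix.rank] at h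
  have h2 : Module.finrank ℝ (Fin m → ℝ) = m := by simp
  rw [h2, h] at h1
  have : Module.finrank ℝ (LinearMap.ker A.mulVecLin) = 0 := by omega
  exact Submodule.finrank_eq_zero.mp this

lemma posDef_transpose_mul_self {n m : ℕ} (A : Matrix (Fin n) (Fin m) ℝ)
    (h : Function.Injective A.mulVecLin) : (Aᵀ * A).PosDef := by
  refine Matrix.PosDef.of_dotProduct_mulVec_pos (Matrix.isHermitian_conjTranspose_mul_self A) fun x hx => ?_
  have hAx : A *ᵥ x ≠ 0 := by
    intro hc
    exact hx (h (by simpa [Matrix.mulVecLin_apply] using hc))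
  have : star x ⬝ᵥ ((Aᵀ * A) *ᵥ x) = (A *ᵥ x) ⬝ᵥ (A *ᵥ x) := by
    rw [star_trivial, ← Matrix.mulVec_mulVec, Matrix.dotProduct_mulVec,
      Matrix.vecMul_transpose]
  rw [this]
  rcases lt_or_eq_of_le (Finset.sum_nonneg fun i _ => mul_self_nonneg (A.mulVec x i)) with h' | h'
  · exact h'
  · exact absurd (dotProduct_self_eq_zero.mp h'.symm) hAx

/-- Lemma (basic properties of T̂), part (1):
`T̂T̂' = Ŵ⁻¹(I_l − σ₀²D⁻¹Ŵ⁻¹) = DÛ⁻¹(I_l − σ₀²Û⁻¹)`. -/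
theorem stmt_0 {n k l : ℕ} (hn : 0 < n) (hk : 0 < k) (hl : 0 < l)
    (hnkl : k + l < n)
    (F : Matrix (Fin n) (Fin k) ℝ) (V : Matrix (Fin n) (Fin l) ℝ)
    (hrank : (Matrix.fromCols F V).rank = k + l)
    (σ0 : ℝ) (hσ0 : 0 < σ0)
    (σ : Fin l → ℝ) (hσ : ∀ j, 0 < σ j)
    (D : Matrix (Fin l) (Fin l) ℝ) (hD : D = Matrix.diagonal σ)
    (Mf : Matrix (Fin n) (Fin n) ℝ) (hMf : Mf = 1 - F * (Fᵀ * F)⁻¹ * Fᵀ)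
    (W : Matrix (Fin l) (Fin l) ℝ) (hW : W = Vᵀ * Mf * V)
    (What : Matrix (Fin l) (Fin l) ℝ) (hWhat : What = W + σ0 • D⁻¹)
    (Uhat : Matrix (Fin l) (Fin l) ℝ) (hUhat : Uhat = W * D + σ0 • (1 : Matrix (Fin l) (Fin l) ℝ))
    (That : Matrix (Fin l) (Fin n) ℝ) (hThat : That = What⁻¹ * Vᵀ * Mf) :
    That * Thatᵀ = What⁻¹ * ((1 : Matrix (Fin l) (Fin l) ℝ) - σ0 • (D⁻¹ * What⁻¹)) ∧
    That * Thatᵀ = D * Uhat⁻¹ * ((1 : Matrix (Fin l) (Fin l) ℝ) - σ0 • Uhat⁻¹) := by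
  classical
  -- reindex the rank hypothesis
  have hrankA : ∀ x : (Fin k ⊕ Fin l) → ℝ, (Matrix.fromCols F V) *ᵥ x = 0 → x = 0 := by
    intro x hx
    have hinj : Function.Injective (Matrix.fromCols F V).mulVecLin := by
      rw [← LinearMap.ker_eq_bot]
      have h1 := (Matrix.fromCols F V).mulVecLin.finrank_range_add_finrank_ker
      rw [Matrix.rank] at hrank
      have h2 : Module.finrank ℝ ((Fin k ⊕ Fin l) → ℝ) = k + l := by simp
      rw [h2, hrank] at h1
      have : Module.finrank ℝ (LinearMap.ker (Matrix.fromCols F V).mulVecLin) = 0 := by omega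
      exact Submodule.finrank_eq_zero.mp this
    rw [← LinearMap.ker_eq_bot] at hinj
    exact (Submodule.mem_bot ℝ).mp (hinj ▸ LinearMap.mem_ker.mpr (by simpa using hx))
  -- F mulVec injective
  have hFinj : Function.Injective F.mulVecLin := by
    rw [← LinearMap.ker_eq_bot, LinearMap.ker_eq_bot']
    intro x hx
    have : (Matrix.fromCols F V) *ᵥ (Sum.elim x 0) = 0 := by
      rw [Matrix.fromCols_mulVec_sumElim]
      simpa using congrArg id (by simpa [Matrix.mulVecLin_apply] using hx)
    have := hrankA _ this
    funext i
    exact congrFun this (Sum.inl i)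
  -- FᵀF invertible
  have hFF : (Fᵀ * F).PosDef := posDef_transpose_mul_self F hFinj
  have hFFunit : IsUnit (Fᵀ * F) := hFF.isUnit
  have hFFinv : (Fᵀ * F) * (Fᵀ * F)⁻¹ = 1 := Matrix.mul_nonsing_inv _ (Matrix.isUnit_iff_isUnit_det _ |>.mp hFFunit)
  have hFFinv' : (Fᵀ * F)⁻¹ * (Fᵀ * F) = 1 := Matrix.nonsing_inv_mul _ (Matrix.isUnit_iff_isUnit_det _ |>.mp hFFunit)
  -- Mf symmetric and idempotent
  have hinvT : ((Fᵀ * F)⁻¹)ᵀ = (Fᵀ * F)⁻¹ := by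
    rw [Matrix.transpose_nonsing_inv, Matrix.transpose_mul, Matrix.transpose_transpose]
  have hMfT : Mfᵀ = Mf := by
    rw [hMf]
    simp [Matrix.transpose_sub, Matrix.transpose_mul, hinvT, Matrix.mul_assoc]
  have hMfIdem : Mf * Mf = Mf := by
    rw [hMf]
    have hP : (F * (Fᵀ * F)⁻¹ * Fᵀ) * (F * (Fᵀ * F)⁻¹ * Fᵀ) = F * (Fᵀ * F)⁻¹ * Fᵀ := by
      calc (F * (Fᵀ * F)⁻¹ * Fᵀ) * (F * (Fᵀ * F)⁻¹ * Fᵀ)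
          = F * (((Fᵀ * F)⁻¹ * (Fᵀ * F)) * ((Fᵀ * F)⁻¹ * Fᵀ)) := by
            simp only [Matrix.mul_assoc]
        _ = F * (Fᵀ * F)⁻¹ * Fᵀ := by rw [hFFinv', Matrix.one_mul, Matrix.mul_assoc]
    rw [Matrix.sub_mul, Matrix.mul_sub, Matrix.mul_sub, Matrix.one_mul, Matrix.mul_one, hP]
    simp only [Matrix.one_mul]
    abel
  -- W is PosSemidef
  have hWps : W.PosSemidef := by
    have : W = (Mf * V)ᵀ * (Mf * V) := by
      rw [hW, Matrix.transpose_mul, hMfT, Matrix.mul_assoc, Matrix.mul_assoc, ← Matrix.mul_assoc Mf,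
        hMfIdem, ← Matrix.mul_assoc]
    rw [this]
    have := Matrix.posSemidef_conjTranspose_mul_self (Mf * V)
    simpa using this
  -- D facts
  have hDpd : D.PosDef := by rw [hD]; exact Matrix.posDef_diagonal_iff.mpr hσ
  have hDunit : IsUnit D.det := hDpd.det_pos.ne'.isUnit
  have hDinv : D⁻¹ = Matrix.diagonal (fun i => (σ i)⁻¹) := by
    refine Matrix.inv_eq_right_inv ?_
    rw [hD, Matrix.diagonal_mul_diagonal]
    ext i j
    by_cases h : i = j <;>
      simp [h, Matrix.diagonal_apply, Matrix.one_apply, mul_inv_cancel₀ (hσ j).ne']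
  have hsDinv : (σ0 • D⁻¹).PosDef := by
    rw [hDinv, ← Matrix.diagonal_smul]
    exact Matrix.posDef_diagonal_iff.mpr fun i => by
      simpa [Pi.smul_apply, smul_eq_mul] using mul_pos hσ0 (inv_pos.mpr (hσ i))
  -- What is PosDef, invertible, symmetric
  have hWhpd : What.PosDef := by rw [hWhat]; exact Matrix.PosDef.posSemidef_add hWps hsDinv
  have hWhdet : IsUnit What.det := hWhpd.det_pos.ne'.isUnit
  have hWhinv : What * What⁻¹ = 1 := Matrix.mul_nonsing_inv _ hWhdet
  have hWhinv' : What⁻¹ * What = 1 := Matrix.nonsing_inv_mul _ hWhdet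
  have hWhT : Whatᵀ = What := by
    have := hWhpd.isHermitian
    simpa [Matrix.IsHermitian, Matrix.conjTranspose_eq_transpose_of_trivial] using this
  have hWhinvT : (What⁻¹)ᵀ = What⁻¹ := by
    rw [Matrix.transpose_nonsing_inv, hWhT]
  -- main computation for the first equality
  have key : That * Thatᵀ = What⁻¹ * W * What⁻¹ := by
    rw [hThat]
    simp only [Matrix.transpose_mul, hMfT, hWhinvT]
    calc What⁻¹ * Vᵀ * Mf * (Mf * (V * What⁻¹))
        = What⁻¹ * (Vᵀ * (Mf * Mf) * V) * What⁻¹ := by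
          simp only [Matrix.mul_assoc]
      _ = What⁻¹ * W * What⁻¹ := by rw [hMfIdem, ← hW]
  have hWsub : W = What - σ0 • D⁻¹ := by rw [hWhat]; abel
  have eq1 : That * Thatᵀ = What⁻¹ * ((1 : Matrix (Fin l) (Fin l) ℝ) - σ0 • (D⁻¹ * What⁻¹)) := by
    rw [key, hWsub]
    simp only [Matrix.mul_sub, Matrix.sub_mul, Matrix.mul_smul, Matrix.smul_mul, hWhinv',
      Matrix.one_mul, Matrix.mul_one, Matrix.mul_assoc]
  refine ⟨eq1, ?_⟩
  -- second equality
  have hDDinv : D * D⁻¹ = 1 := Matrix.mul_nonsing_inv _ hDunit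
  have hDinvD : D⁻¹ * D = 1 := Matrix.nonsing_inv_mul _ hDunit
  have hUW : Uhat = What * D := by
    rw [hUhat, hWhat, Matrix.add_mul, Matrix.smul_mul, hDinvD]
  have hUinv : Uhat⁻¹ = D⁻¹ * What⁻¹ := by
    rw [hUW, Matrix.mul_inv_rev]
  have hDU : D * Uhat⁻¹ = What⁻¹ := by
    rw [hUinv, ← Matrix.mul_assoc, hDDinv, Matrix.one_mul]
  rw [eq1, hUinv, ← Matrix.mul_assoc, hDDinv, Matrix.one_mul]
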